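/- Assume A and B satisfy Cuntz–Krieger condition (I). If h : X_A → X_B is a homeomorphism implementing a topological orbit equivalence between (X_A, σ_A) and (X_B, σ_B), then the unitary u_h : ℓ²(X_A) → ℓ²(X_B) defined by u_h e_x = e_{h(x)} satisfies u_h O_A u_h^* = O_B and u_h M_f u_h^* = M_{f ∘ h^{-1}} for all f ∈ C(X_A,ℂ); in particular u_h D_A u_h^* = D_B, so Ad(u_h) is an isomorphism Φ : O_A → O_B with Φ(D_A) = D_B. -/

import Mathlib

open Matrix

/-- The one-sided topological Markov shift space `X_A` determined by a square matrix `A`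
(with entries in `{0,1}`): sequences `x : ℕ → Fin N` with `A (x n) (x (n+1)) = 1` for all
`n`, carrying the (subspace of the) product topology. -/
abbrev MarkovShift {N : ℕ} (A : Matrix (Fin N) (Fin N) ℕ) : Type :=
  { x : ℕ → Fin N // ∀ n, A (x n) (x (n + 1)) = 1 }

/-- The shift transformation `σ_A`. -/
def mshift {N : ℕ} (A : Matrix (Fin N) (Fin N) ℕ) :
    MarkovShift A → MarkovShift A :=
  fun x => ⟨fun n => x.1 (n + 1), fun n => x.2 (n + 1)⟩

/-- The orbit `orb_{σ_A}(x) = ⋃_{k≥0} ⋃_{l≥0} σ_A^{-k}(σ_A^l(x))` of `x`. -/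
def orb {N : ℕ} (A : Matrix (Fin N) (Fin N) ℕ) (x : MarkovShift A) :
    Set (MarkovShift A) :=
  { y | ∃ k l : ℕ, (mshift A)^[k] y = (mshift A)^[l] x }

/-- The full group `[σ_A]`: homeomorphisms moving every point within its orbit. -/
def fullGroup {N : ℕ} (A : Matrix (Fin N) (Fin N) ℕ) :
    Set (MarkovShift A ≃ₜ MarkovShift A) :=
  { τ | ∀ x, τ x ∈ orb A x }

/-- The topological full group `[σ_A]_c`: elements of the full group with continuous
orbit cocycles. -/
def topFullGroup {N : ℕ} (A : Matrix (Fin N) (Fin N) ℕ) :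
    Set (MarkovShift A ≃ₜ MarkovShift A) :=
  { τ | τ ∈ fullGroup A ∧ ∃ k l : MarkovShift A → ℕ, Continuous k ∧ Continuous l ∧
      ∀ x, (mshift A)^[k x] (τ x) = (mshift A)^[l x] x }

/-- Cuntz–Krieger condition (I), formulated as: the shift space has no isolated points. -/
def ConditionI {N : ℕ} (A : Matrix (Fin N) (Fin N) ℕ) : Prop :=
  ∀ x : MarkovShift A, ¬ IsOpen ({x} : Set (MarkovShift A))

noncomputable section

/-- The Hilbert space `ℓ²(X_A)` with orthonormal basis indexed by points of `X_A`. -/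
abbrev MSHilbert {N : ℕ} (A : Matrix (Fin N) (Fin N) ℕ) : Type :=
  lp (fun _ : MarkovShift A => ℂ) 2

/-- The standard orthonormal basis vector `e_x` of `ℓ²(X_A)`. -/
def basisVec {N : ℕ} (A : Matrix (Fin N) (Fin N) ℕ) (x : MarkovShift A) :
    MSHilbert A :=
  letI : DecidableEq (MarkovShift A) := Classical.decEq _
  lp.single 2 x 1

/-- The point `ix = (i, x₁, x₂, …) ∈ X_A`, defined when `A(i, x₁) = 1`. -/
def mcons {N : ℕ} (A : Matrix (Fin N) (Fin N) ℕ) (j : Fin N) (x : MarkovShift A)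
    (h : A j (x.1 0) = 1) : MarkovShift A :=
  ⟨fun n => Nat.casesOn n j fun m => x.1 m, by
    intro n
    cases n with
    | zero => exact h
    | succ m => exact x.2 m⟩

/-- `T` acts on the basis by `T e_x = e_{ix}` if `ix ∈ X_A`, and `T e_x = 0` otherwise;
this is the defining property of the canonical generating partial isometry `T_i`. -/
def IsShiftOp {N : ℕ} (A : Matrix (Fin N) (Fin N) ℕ) (i : Fin N)
    (T : MSHilbert A →L[ℂ] MSHilbert A) : Prop :=
  ∀ x : MarkovShift A,
    (∀ h : A i (x.1 0) = 1, T (basisVec A x) = basisVec A (mcons A i x h)) ∧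
    (¬ A i (x.1 0) = 1 → T (basisVec A x) = 0)

/-- `T` is the family `T_1, …, T_N` of canonical generating partial isometries. -/
def IsGenFamily {N : ℕ} (A : Matrix (Fin N) (Fin N) ℕ)
    (T : Fin N → (MSHilbert A →L[ℂ] MSHilbert A)) : Prop :=
  ∀ i, IsShiftOp A i (T i)

/-- `M` assigns to every `f ∈ C(X_A, ℂ)` the multiplication operator `M_f`,
characterized by `M_f e_x = f(x) • e_x`. -/
def IsMultOp {N : ℕ} (A : Matrix (Fin N) (Fin N) ℕ)
    (M : C(MarkovShift A, ℂ) → (MSHilbert A →L[ℂ] MSHilbert A)) : Prop :=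
  ∀ (f : C(MarkovShift A, ℂ)) (x : MarkovShift A),
    M f (basisVec A x) = f x • basisVec A x

/-- The Cuntz–Krieger algebra `O_A`: the norm closure of the ∗-subalgebra of
`B(ℓ²(X_A))` generated by `T_1, …, T_N`. -/
def CKalg {N : ℕ} (A : Matrix (Fin N) (Fin N) ℕ)
    (T : Fin N → (MSHilbert A →L[ℂ] MSHilbert A)) :
    StarSubalgebra ℂ (MSHilbert A →L[ℂ] MSHilbert A) :=
  (StarAlgebra.adjoin ℂ (Set.range T)).topologicalClosure

section Basics
variable {M : ℕ} (C : Matrix (Fin M) (Fin M) ℕ)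

lemma markov_isClosed : IsClosed {x : ℕ → Fin M | ∀ n, C (x n) (x (n + 1)) = 1} := by
  have : {x : ℕ → Fin M | ∀ n, C (x n) (x (n + 1)) = 1} =
      ⋂ n, {x : ℕ → Fin M | C (x n) (x (n + 1)) = 1} := by
    ext x; simp [Set.mem_iInter]
  rw [this]
  refine isClosed_iInter fun n => ?_
  have hc : Continuous fun x : ℕ → Fin M => C (x n) (x (n + 1)) := by
    have h1 : Continuous fun x : ℕ → Fin M => (x n, x (n + 1)) :=
      (continuous_apply n).prodMk (continuous_apply (n + 1))
    exact (continuous_of_discreteTopology (f := fun p : Fin M × Fin M => C p.1 p.2)).comp h1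
  exact (IsClosed.preimage hc isClosed_singleton :)

instance MarkovShift.compactSpace : CompactSpace (MarkovShift C) :=
  isCompact_iff_compactSpace.mp ((markov_isClosed C).isCompact)

end Basics
section LpBasics
open scoped Classical
variable {M : ℕ} {C : Matrix (Fin M) (Fin M) ℕ}

lemma basisVec_eq [DecidableEq (MarkovShift C)] (x : MarkovShift C) :
    basisVec C x = lp.single 2 x 1 := by
  unfold basisVec
  congr!

lemma basisVec_apply (x y : MarkovShift C) :
    (basisVec C x : ∀ _ : MarkovShift C, ℂ) y = if y = x then 1 else 0 := by
  rw [basisVec_eq, lp.single_apply]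
  split_ifs with h <;> simp [h]

lemma smul_basisVec_apply (c : ℂ) (x y : MarkovShift C) :
    (c • basisVec C x : MSHilbert C) y = if y = x then c else 0 := by
  rw [lp.coeFn_smul, Pi.smul_apply, basisVec_apply]
  split_ifs <;> simp

lemma single_eq_smul_basisVec [DecidableEq (MarkovShift C)] (x : MarkovShift C) (c : ℂ) :
    lp.single 2 x c = c • basisVec C x := by
  refine lp.ext (funext fun y => ?_)
  rw [smul_basisVec_apply, lp.single_apply]
  split_ifs with h <;> simp [h]

lemma inner_basisVec_left (x : MarkovShift C) (f : MSHilbert C) :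
    @inner ℂ _ _ (basisVec C x) f = f x := by
  rw [basisVec_eq, lp.inner_single_left]
  simp

/-- Equality of continuous linear maps out of `ℓ²(X_C)` can be checked on basis vectors. -/
lemma clm_ext_basis {F : Type*} [NormedAddCommGroup F] [NormedSpace ℂ F]
    (T T' : MSHilbert C →L[ℂ] F)
    (h : ∀ x, T (basisVec C x) = T' (basisVec C x)) : T = T' := by
  classical
  ext f
  have hs : HasSum (fun x : MarkovShift C => lp.single 2 x (f x)) f :=
    lp.hasSum_single (by norm_num) f
  have h1 : HasSum (fun x : MarkovShift C => T (lp.single 2 x (f x))) (T f) := T.hasSum hs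
  have h2 : HasSum (fun x : MarkovShift C => T' (lp.single 2 x (f x))) (T' f) := T'.hasSum hs
  have he : (fun x : MarkovShift C => T (lp.single 2 x (f x)))
      = fun x : MarkovShift C => T' (lp.single 2 x (f x)) := by
    funext x
    rw [single_eq_smul_basisVec]; simp only [_root_.map_smul, h x]
  rw [he] at h1
  exact h1.unique h2

/-- Equality of vectors in `ℓ²(X_C)` can be checked via inner products with basis vectors. -/
lemma vec_ext_inner {f g : MSHilbert C}
    (h : ∀ x, @inner ℂ _ _ (basisVec C x) f = @inner ℂ _ _ (basisVec C x) g) : f = g := by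
  refine lp.ext (funext fun x => ?_)
  have := h x
  rwa [inner_basisVec_left, inner_basisVec_left] at this

end LpBasics
section Words
open scoped Classical
variable {M : ℕ} {C : Matrix (Fin M) (Fin M) ℕ}

lemma mshift_iter_coord (n m : ℕ) (z : MarkovShift C) :
    ((mshift C)^[n] z).1 m = z.1 (m + n) := by
  induction n generalizing z with
  | zero => rfl
  | succ n ih =>
    rw [Function.iterate_succ_apply, ih]
    show z.1 (m + n + 1) = z.1 (m + (n + 1))
    ring_nf

lemma mshift_mcons (i : Fin M) (x : MarkovShift C) (h : C i (x.1 0) = 1) :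
    mshift C (mcons C i x h) = x := by
  refine Subtype.ext (funext fun n => rfl)

lemma eq_mcons_iff (i : Fin M) (x z : MarkovShift C) (h : C i (x.1 0) = 1) :
    z = mcons C i x h ↔ z.1 0 = i ∧ mshift C z = x := by
  constructor
  · rintro rfl
    exact ⟨rfl, mshift_mcons i x h⟩
  · rintro ⟨h0, hs⟩
    refine Subtype.ext (funext fun n => ?_)
    cases n with
    | zero => exact h0
    | succ m =>
      have : (mshift C z).1 m = x.1 m := by rw [hs]
      exact this

lemma inner_basisVec_right (x : MarkovShift C) (f : MSHilbert C) :
    @inner ℂ _ _ f (basisVec C x) = (starRingEnd ℂ) (f x) := by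
  rw [← inner_conj_symm, inner_basisVec_left]

lemma inner_basisVec_basisVec (x y : MarkovShift C) :
    @inner ℂ _ _ (basisVec C x) (basisVec C y) = if x = y then 1 else 0 := by
  rw [inner_basisVec_left, basisVec_apply]

lemma coord_eq_conj_inner (f : MSHilbert C) (x : MarkovShift C) :
    (f : ∀ _, ℂ) x = (starRingEnd ℂ) (@inner ℂ _ _ f (basisVec C x)) := by
  rw [inner_basisVec_right, Complex.conj_conj]

variable (TC : Fin M → (MSHilbert C →L[ℂ] MSHilbert C))

lemma adjoint_gen_apply (hTC : IsGenFamily C TC) (i : Fin M) (z : MarkovShift C) :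
    ContinuousLinearMap.adjoint (TC i) (basisVec C z)
      = if z.1 0 = i then basisVec C (mshift C z) else 0 := by
  refine lp.ext (funext fun x => ?_)
  rw [coord_eq_conj_inner, ContinuousLinearMap.adjoint_inner_left]
  by_cases hx : C i (x.1 0) = 1
  · rw [(hTC i x).1 hx, inner_basisVec_basisVec]
    by_cases hz : z.1 0 = i
    · by_cases hzz : mshift C z = x
      · rw [if_pos ((eq_mcons_iff i x z hx).2 ⟨hz, hzz⟩)]
        simp [hz, basisVec_apply, hzz.symm]
      · rw [if_neg (fun hc => hzz ((eq_mcons_iff i x z hx).1 hc).2)]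
        have : x ≠ mshift C z := fun hc => hzz hc.symm
        simp [hz, basisVec_apply, this]
    · rw [if_neg (fun hc => hz ((eq_mcons_iff i x z hx).1 hc).1)]
      simp [hz]
  · rw [(hTC i x).2 hx, inner_zero_right]
    by_cases hz : z.1 0 = i
    · have : x ≠ mshift C z := by
        intro hc
        apply hx
        subst hc
        have := z.2 0
        rwa [hz] at this
      simp [hz, basisVec_apply, this]
    · simp [hz]

end Words
section Sword
variable {M : ℕ} {C : Matrix (Fin M) (Fin M) ℕ}

/-- The list of the first `n` symbols of `z`. -/
def prefixList (z : MarkovShift C) (n : ℕ) : List (Fin M) :=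
  List.ofFn fun j : Fin n => z.1 j

lemma prefixList_succ (z : MarkovShift C) (n : ℕ) :
    prefixList z (n + 1) = z.1 0 :: prefixList (mshift C z) n := by
  unfold prefixList
  rw [List.ofFn_succ]
  rfl

lemma prefixList_length (z : MarkovShift C) (n : ℕ) : (prefixList z n).length = n := by
  simp [prefixList]

variable (TC : Fin M → (MSHilbert C →L[ℂ] MSHilbert C))

/-- The partial isometry `S_w = T_{w₁} ⋯ T_{w_k}` associated to a word `w`. -/
def Sword : List (Fin M) → (MSHilbert C →L[ℂ] MSHilbert C)
  | [] => 1
  | j :: w => TC j ∘L Sword w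

lemma Sword_mem (w : List (Fin M)) : Sword TC w ∈ CKalg C TC := by
  induction w with
  | nil => exact one_mem _
  | cons j w ih =>
    exact mul_mem (StarSubalgebra.le_topologicalClosure _
      (StarAlgebra.subset_adjoin ℂ _ ⟨j, rfl⟩)) ih

lemma Sword_apply_prefix (hTC : IsGenFamily C TC) (n : ℕ) (z : MarkovShift C) :
    Sword TC (prefixList z n) (basisVec C ((mshift C)^[n] z)) = basisVec C z := by
  induction n generalizing z with
  | zero => rfl
  | succ n ih =>
    rw [prefixList_succ, Function.iterate_succ_apply]
    show TC (z.1 0) (Sword TC (prefixList (mshift C z) n)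
      (basisVec C ((mshift C)^[n] (mshift C z)))) = basisVec C z
    rw [ih (mshift C z)]
    have hadm : C (z.1 0) ((mshift C z).1 0) = 1 := z.2 0
    rw [(hTC (z.1 0) (mshift C z)).1 hadm]
    congr 1
    symm
    rw [eq_mcons_iff]
    exact ⟨rfl, rfl⟩

lemma Sword_adjoint_apply (hTC : IsGenFamily C TC) (w : List (Fin M)) (z : MarkovShift C) :
    ContinuousLinearMap.adjoint (Sword TC w) (basisVec C z)
      = if prefixList z w.length = w then basisVec C ((mshift C)^[w.length] z) else 0 := by
  induction w generalizing z with
  | nil =>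
    have h1 : ContinuousLinearMap.adjoint (Sword TC ([] : List (Fin M))) = 1 := by
      have : Sword TC ([] : List (Fin M)) = ContinuousLinearMap.id ℂ (MSHilbert C) := rfl
      rw [this, ContinuousLinearMap.adjoint_id]
      rfl
    rw [h1]
    simp [prefixList]
  | cons j w ih =>
    show ContinuousLinearMap.adjoint (TC j ∘L Sword TC w) (basisVec C z) = _
    rw [ContinuousLinearMap.adjoint_comp, ContinuousLinearMap.coe_comp', Function.comp_apply,
      adjoint_gen_apply TC hTC]
    by_cases hz : z.1 0 = j
    · rw [if_pos hz, ih]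
      rw [List.length_cons, prefixList_succ]
      by_cases hw : prefixList (mshift C z) w.length = w
      · rw [if_pos hw, if_pos (by rw [hz, hw]), Function.iterate_succ_apply]
      · rw [if_neg hw, if_neg (by
          intro hc
          exact hw (List.cons.injEq .. ▸ hc |>.2))]
    · rw [if_neg hz, map_zero, List.length_cons, prefixList_succ, if_neg (by
        intro hc
        exact hz ((List.cons.injEq .. ▸ hc).1))]

lemma Sword_proj_apply (hTC : IsGenFamily C TC) (w : List (Fin M)) (z : MarkovShift C) :
    (Sword TC w ∘L ContinuousLinearMap.adjoint (Sword TC w)) (basisVec C z)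
      = if prefixList z w.length = w then basisVec C z else 0 := by
  rw [ContinuousLinearMap.coe_comp', Function.comp_apply, Sword_adjoint_apply TC hTC]
  by_cases hw : prefixList z w.length = w
  · rw [if_pos hw, if_pos hw, ← hw, prefixList_length, Sword_apply_prefix TC hTC]
  · rw [if_neg hw, if_neg hw, map_zero]

end Sword
section Topology

lemma range_finite_of_locally_constant {X Y : Type*} [TopologicalSpace X] [CompactSpace X]
    (f : X → Y) (h : ∀ x, ∃ U : Set X, IsOpen U ∧ x ∈ U ∧ ∀ x' ∈ U, f x' = f x) :
    (Set.range f).Finite := by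
  classical
  choose U hUo hUm hUc using h
  obtain ⟨t, ht⟩ := isCompact_univ.elim_finite_subcover U hUo
    (fun x _ => Set.mem_iUnion.2 ⟨x, hUm x⟩)
  refine Set.Finite.subset (t.image f).finite_toSet ?_
  rintro _ ⟨x, rfl⟩
  obtain ⟨x₀, hx₀t, hx₀⟩ := Set.mem_iUnion₂.1 (ht (Set.mem_univ x))
  exact Finset.mem_coe.2 (Finset.mem_image.2 ⟨x₀, hx₀t, (hUc x₀ x hx₀).symm⟩)

lemma preimage_isOpen_of_locally_constant {X Y : Type*} [TopologicalSpace X]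
    (f : X → Y) (h : ∀ x, ∃ U : Set X, IsOpen U ∧ x ∈ U ∧ ∀ x' ∈ U, f x' = f x)
    (s : Set Y) : IsOpen (f ⁻¹' s) := by
  refine isOpen_iff_forall_mem_open.2 fun x hx => ?_
  obtain ⟨U, hUo, hUm, hUc⟩ := h x
  exact ⟨U, fun x' hx' => by
    simp only [Set.mem_preimage] at hx ⊢
    rw [hUc x' hx']; exact hx, hUo, hUm⟩

lemma fiber_isOpen_of_locally_constant {X Y : Type*} [TopologicalSpace X]
    (f : X → Y) (h : ∀ x, ∃ U : Set X, IsOpen U ∧ x ∈ U ∧ ∀ x' ∈ U, f x' = f x)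
    (c : Y) : IsOpen (f ⁻¹' {c}) := by
  refine isOpen_iff_forall_mem_open.2 fun x hx => ?_
  obtain ⟨U, hUo, hUm, hUc⟩ := h x
  exact ⟨U, fun x' hx' => by
    simp only [Set.mem_preimage, Set.mem_singleton_iff] at hx ⊢
    rw [hUc x' hx', hx], hUo, hUm⟩

variable {M : ℕ} {C : Matrix (Fin M) (Fin M) ℕ}

lemma isOpen_agree_set (y : MarkovShift C) (m : ℕ) :
    IsOpen {z : MarkovShift C | ∀ j, j < m → z.1 j = y.1 j} := by
  have hcont : Continuous (fun z : MarkovShift C => (fun j : Fin m => z.1 j)) :=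
    continuous_pi fun j => (continuous_apply (j : ℕ)).comp continuous_subtype_val
  have : {z : MarkovShift C | ∀ j, j < m → z.1 j = y.1 j}
      = (fun z : MarkovShift C => (fun j : Fin m => z.1 j)) ⁻¹'
        {fun j : Fin m => y.1 j} := by
    ext z
    simp only [Set.mem_setOf_eq, Set.mem_preimage, Set.mem_singleton_iff, funext_iff]
    constructor
    · intro hz j; exact hz j j.2
    · intro hz j hj; exact hz ⟨j, hj⟩
  rw [this]
  exact (isOpen_discrete _).preimage hcont

lemma exists_cyl_basis {W : Set (MarkovShift C)} (hW : IsOpen W) {y : MarkovShift C}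
    (hy : y ∈ W) : ∃ n : ℕ, ∀ z : MarkovShift C, (∀ j, j < n → z.1 j = y.1 j) → z ∈ W := by
  obtain ⟨V, hV, rfl⟩ := isOpen_induced_iff.1 hW
  obtain ⟨I, u, hIu, hpi⟩ := isOpen_pi_iff.1 hV y.1 hy
  refine ⟨(I.sup id) + 1, fun z hz => ?_⟩
  refine hpi fun i hi => ?_
  rw [hz i (Nat.lt_succ_of_le (Finset.le_sup (f := id) hi))]
  exact (hIu i hi).2

lemma clopen_cyl_level {W : Set (MarkovShift C)} (hW : IsClopen W) :
    ∃ n : ℕ, ∀ z z' : MarkovShift C, (∀ j, j < n → z.1 j = z'.1 j) → z ∈ W → z' ∈ W := by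
  classical
  by_cases hne : W = ∅
  · exact ⟨0, fun z z' _ hz => by rw [hne] at hz; exact absurd hz (Set.notMem_empty z)⟩
  have hbasis : ∀ y : W, ∃ n : ℕ,
      ∀ z : MarkovShift C, (∀ j, j < n → z.1 j = y.1.1 j) → z ∈ W :=
    fun y => exists_cyl_basis hW.2 y.2
  choose n hn using hbasis
  obtain ⟨t, ht⟩ := (hW.1.isCompact).elim_finite_subcover
    (fun y : W => {z : MarkovShift C | ∀ j, j < n y → z.1 j = y.1.1 j})
    (fun y => isOpen_agree_set y.1 (n y))
    (fun z hz => Set.mem_iUnion.2 ⟨⟨z, hz⟩, fun j _ => rfl⟩)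
  refine ⟨t.sup n + 1, fun z z' hagree hz => ?_⟩
  obtain ⟨y, hyt, hy⟩ := Set.mem_iUnion₂.1 (ht hz)
  refine hn y z' fun j hj => ?_
  rw [← hagree j (Nat.lt_succ_of_le (le_trans (le_of_lt hj) (Finset.le_sup hyt)))]
  exact hy j hj

end Topology
section Proj
open scoped Classical
variable {M : ℕ} {C : Matrix (Fin M) (Fin M) ℕ}
variable (TC : Fin M → (MSHilbert C →L[ℂ] MSHilbert C))

lemma prefixList_eq_ofFn_iff (z : MarkovShift C) (n : ℕ) (v : Fin n → Fin M) :
    prefixList z n = List.ofFn v ↔ ∀ j : Fin n, z.1 j = v j := by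
  unfold prefixList
  rw [List.ofFn_inj, funext_iff]

lemma proj_clopen (hTC : IsGenFamily C TC) {W : Set (MarkovShift C)} (hW : IsClopen W) :
    ∃ P : MSHilbert C →L[ℂ] MSHilbert C, P ∈ CKalg C TC ∧
      ∀ z, P (basisVec C z) = if z ∈ W then basisVec C z else 0 := by
  obtain ⟨n, hn⟩ := clopen_cyl_level hW
  set P : MSHilbert C →L[ℂ] MSHilbert C :=
    ∑ v : Fin n → Fin M, if (∃ z' ∈ W, ∀ j : Fin n, z'.1 j = v j) then
      Sword TC (List.ofFn v) ∘L ContinuousLinearMap.adjoint (Sword TC (List.ofFn v)) else 0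
    with hP
  refine ⟨P, ?_, ?_⟩
  · refine sum_mem fun v _ => ?_
    split_ifs
    · have : Sword TC (List.ofFn v) ∘L ContinuousLinearMap.adjoint (Sword TC (List.ofFn v))
          = Sword TC (List.ofFn v) * star (Sword TC (List.ofFn v)) := by
        rw [ContinuousLinearMap.star_eq_adjoint]; rfl
      rw [this]
      exact mul_mem (Sword_mem TC _) (star_mem (Sword_mem TC _))
    · exact zero_mem _
  · intro z
    rw [hP, ContinuousLinearMap.sum_apply]
    rw [Finset.sum_eq_single (fun j : Fin n => z.1 j)]
    · by_cases hzW : (∃ z' ∈ W, ∀ j : Fin n, z'.1 j = z.1 j)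
      · rw [if_pos hzW, ContinuousLinearMap.coe_comp', Function.comp_apply,
          Sword_adjoint_apply TC hTC, List.length_ofFn,
          if_pos ((prefixList_eq_ofFn_iff z n _).2 fun j => rfl)]
        have h2 : prefixList z n = List.ofFn (fun j : Fin n => z.1 j) := rfl
        rw [← h2, ← prefixList_length z n]
        conv_lhs => rw [← prefixList_length z n]
        rw [Sword_apply_prefix TC hTC]
        obtain ⟨z', hz'W, hz'⟩ := hzW
        rw [if_pos (hn z' z (fun j hj => (hz' ⟨j, hj⟩ :)) hz'W)]
      · rw [if_neg hzW, if_neg (fun hzW' => hzW ⟨z, hzW', fun _ => rfl⟩),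
          ContinuousLinearMap.zero_apply]
    · intro v _ hv
      split_ifs with hc
      · rw [ContinuousLinearMap.coe_comp', Function.comp_apply,
          Sword_adjoint_apply TC hTC, List.length_ofFn,
          if_neg (by
            rw [prefixList_eq_ofFn_iff]
            intro hcontra
            exact hv (funext fun j => (hcontra j).symm ▸ rfl)), map_zero]
      · rfl
    · intro hmem
      exact absurd (Finset.mem_univ _) hmem

end Proj
section Core
open scoped Classical

variable {N N' : ℕ} {A : Matrix (Fin N) (Fin N) ℕ} {B : Matrix (Fin N') (Fin N') ℕ}

lemma prefixList_congr {z z' : MarkovShift B} {n : ℕ}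
    (h : ∀ j, j < n → z.1 j = z'.1 j) : prefixList z n = prefixList z' n := by
  unfold prefixList
  exact congrArg List.ofFn (funext fun j => h j j.2)

/-- The key lemma: an operator acting like `e_{g x} ↦ e_{g (i·x)}` lies in the
Cuntz--Krieger algebra of `B`, provided `g` intertwines the shifts up to continuous
cocycles. -/
lemma core_mem
    (TB : Fin N' → (MSHilbert B →L[ℂ] MSHilbert B)) (hTB : IsGenFamily B TB)
    (g : MarkovShift A ≃ₜ MarkovShift B)
    (k l : MarkovShift A → ℕ) (hk : Continuous k) (hl : Continuous l)
    (hcoc : ∀ x, (mshift B)^[k x] (g (mshift A x)) = (mshift B)^[l x] (g x))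
    (i : Fin N) (R : MSHilbert B →L[ℂ] MSHilbert B)
    (hR : ∀ x : MarkovShift A,
      (∀ h : A i (x.1 0) = 1, R (basisVec B (g x)) = basisVec B (g (mcons A i x h))) ∧
      (¬ A i (x.1 0) = 1 → R (basisVec B (g x)) = 0)) :
    R ∈ CKalg B TB := by
  -- the clopen set of points that can be extended by `i`
  set S : Set (MarkovShift A) := {x | A i (x.1 0) = 1} with hS
  have hScl : IsClopen S := by
    have hcont : Continuous fun x : MarkovShift A => A i (x.1 0) :=
      (continuous_of_discreteTopology (f := fun a : Fin N => A i a)).comp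
        ((continuous_apply 0).comp continuous_subtype_val)
    have : S = (fun x : MarkovShift A => A i (x.1 0)) ⁻¹' {1} := rfl
    rw [this]
    exact (isClopen_discrete _).preimage hcont
  -- the extension map
  set m : MarkovShift A → MarkovShift A :=
    fun x => if hx : A i (x.1 0) = 1 then mcons A i x hx else x with hm
  have hmcont : Continuous m := by
    rw [continuous_induced_rng]
    refine continuous_pi fun n => ?_
    show Continuous fun x : MarkovShift A => (m x).1 n
    have : (fun x : MarkovShift A => (m x).1 n)
        = fun x : MarkovShift A => if A i (x.1 0) = 1 then
            (Nat.casesOn n i fun j => x.1 j : Fin N) else x.1 n := by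
      funext x
      by_cases hx : A i (x.1 0) = 1
      · rw [hm]; simp only [dif_pos hx, if_pos hx]; rfl
      · rw [hm]; simp only [dif_neg hx, if_neg hx]
    rw [this]
    refine Continuous.if (by rw [hScl.frontier_eq]; simp) ?_ ?_
    · cases n with
      | zero => exact continuous_const
      | succ j => exact (continuous_apply j).comp continuous_subtype_val
    · exact (continuous_apply n).comp continuous_subtype_val
  -- the configuration map
  set D : MarkovShift A → Option (ℕ × ℕ × List (Fin N') × List (Fin N')) :=
    fun x => if A i (x.1 0) = 1 then
      some (k (m x), l (m x), prefixList (g (m x)) (l (m x)), prefixList (g x) (k (m x)))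
    else none with hD
  -- local constancy of `D`
  have hDlc : ∀ x : MarkovShift A, ∃ U : Set (MarkovShift A),
      IsOpen U ∧ x ∈ U ∧ ∀ x' ∈ U, D x' = D x := by
    intro x
    by_cases hx : A i (x.1 0) = 1
    · refine ⟨S ∩ (k ∘ m) ⁻¹' {k (m x)} ∩ (l ∘ m) ⁻¹' {l (m x)}
        ∩ (g ∘ m) ⁻¹' {z | ∀ j, j < l (m x) → z.1 j = (g (m x)).1 j}
        ∩ ⇑g ⁻¹' {z | ∀ j, j < k (m x) → z.1 j = (g x).1 j}, ?_, ?_, ?_⟩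
      · refine (((((hScl.2.inter ((isOpen_discrete _).preimage (hk.comp hmcont))).inter
          ((isOpen_discrete _).preimage (hl.comp hmcont))).inter
          ((isOpen_agree_set _ _).preimage (g.continuous.comp hmcont))).inter
          ((isOpen_agree_set _ _).preimage g.continuous)))
      · exact ⟨⟨⟨⟨hx, rfl⟩, rfl⟩, fun j _ => rfl⟩, fun j _ => rfl⟩
      · rintro x' ⟨⟨⟨⟨hx'S, hx'k⟩, hx'l⟩, hx'g⟩, hx'g'⟩
        have hkx : k (m x') = k (m x) := hx'k
        have hlx : l (m x') = l (m x) := hx'l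
        have hx'S' : A i (x'.1 0) = 1 := hx'S
        have e1 : D x' = some (k (m x'), l (m x'), prefixList (g (m x')) (l (m x')),
            prefixList (g x') (k (m x'))) := by
          rw [hD]; exact if_pos hx'S'
        have e2 : D x = some (k (m x), l (m x), prefixList (g (m x)) (l (m x)),
            prefixList (g x) (k (m x))) := by
          rw [hD]; exact if_pos hx
        rw [e1, e2, hkx, hlx,
          show prefixList (g (m x')) (l (m x)) = prefixList (g (m x)) (l (m x)) from
            prefixList_congr hx'g,
          show prefixList (g x') (k (m x)) = prefixList (g x) (k (m x)) from
            prefixList_congr hx'g']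
    · refine ⟨Sᶜ, hScl.1.isOpen_compl, hx, fun x' hx' => ?_⟩
      have hx'' : ¬ A i (x'.1 0) = 1 := hx'
      have e1 : D x' = none := by rw [hD]; exact if_neg hx''
      have e2 : D x = none := by rw [hD]; exact if_neg hx
      rw [e1, e2]
  -- fibers of `D` are clopen, their images under `g` too
  have hfib : ∀ c, IsClopen (D ⁻¹' {c}) := by
    intro c
    constructor
    · have : (D ⁻¹' {c})ᶜ = D ⁻¹' {c}ᶜ := rfl
      rw [← isOpen_compl_iff, this]
      exact preimage_isOpen_of_locally_constant D hDlc _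
    · exact fiber_isOpen_of_locally_constant D hDlc c
  have himg : ∀ c, IsClopen (⇑g '' (D ⁻¹' {some c})) := by
    intro c
    rw [show ⇑g '' (D ⁻¹' {some c}) = ⇑g.symm ⁻¹' (D ⁻¹' {some c}) from
      Equiv.image_eq_preimage_symm g.toEquiv _]
    exact (hfib _).preimage g.symm.continuous
  -- projections onto the fiber images
  have hproj : ∀ c : ℕ × ℕ × List (Fin N') × List (Fin N'),
      ∃ P : MSHilbert B →L[ℂ] MSHilbert B, P ∈ CKalg B TB ∧
        ∀ z, P (basisVec B z) =
          if z ∈ ⇑g '' (D ⁻¹' {some c}) then basisVec B z else 0 :=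
    fun c => proj_clopen TB hTB (himg c)
  choose P hPmem hPact using hproj
  -- the candidate finite-sum expression for `R`
  set T : Option (ℕ × ℕ × List (Fin N') × List (Fin N')) →
      (MSHilbert B →L[ℂ] MSHilbert B) :=
    fun c => Option.casesOn c 0 fun d =>
      Sword TB d.2.2.1 ∘L ContinuousLinearMap.adjoint (Sword TB d.2.2.2) ∘L P d
    with hT
  have hfin : (Set.range D).Finite := range_finite_of_locally_constant D hDlc
  have hmem : (∑ c ∈ hfin.toFinset, T c) ∈ CKalg B TB := by
    refine sum_mem fun c _ => ?_
    rw [hT]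
    cases c with
    | none => exact zero_mem _
    | some d =>
      show Sword TB d.2.2.1 ∘L ContinuousLinearMap.adjoint (Sword TB d.2.2.2) ∘L P d
        ∈ CKalg B TB
      have h1 : Sword TB d.2.2.1 ∘L ContinuousLinearMap.adjoint (Sword TB d.2.2.2) ∘L P d
          = Sword TB d.2.2.1 * (star (Sword TB d.2.2.2) * P d) := by
        rw [ContinuousLinearMap.star_eq_adjoint]; rfl
      rw [h1]
      exact mul_mem (Sword_mem TB _) (mul_mem (star_mem (Sword_mem TB _)) (hPmem d))
  have hRT : R = ∑ c ∈ hfin.toFinset, T c := by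
    refine clm_ext_basis _ _ fun y => ?_
    obtain ⟨x, rfl⟩ : ∃ x, g x = y := ⟨g.symm y, g.apply_symm_apply y⟩
    rw [ContinuousLinearMap.sum_apply]
    by_cases hx : A i (x.1 0) = 1
    · -- the configuration of x
      have hDx : D x = some (k (m x), l (m x), prefixList (g (m x)) (l (m x)),
          prefixList (g x) (k (m x))) := by rw [hD]; simp only [if_pos hx]
      rw [(hR x).1 hx]
      rw [Finset.sum_eq_single (D x)]
      · rw [hDx]
        symm
        show Sword TB (prefixList (g (m x)) (l (m x))) (ContinuousLinearMap.adjoint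
          (Sword TB (prefixList (g x) (k (m x))))
          (P (k (m x), l (m x), prefixList (g (m x)) (l (m x)),
            prefixList (g x) (k (m x))) (basisVec B (g x))))
          = basisVec B (g (mcons A i x hx))
        rw [hPact, if_pos ⟨x, by rw [Set.mem_preimage, Set.mem_singleton_iff, hDx], rfl⟩]
        rw [Sword_adjoint_apply TB hTB, prefixList_length, if_pos rfl]
        have hmx : m x = mcons A i x hx := by rw [hm]; simp only [dif_pos hx]
        have hshift : mshift A (m x) = x := by rw [hmx]; exact mshift_mcons i x hx
        have hc := hcoc (m x)
        rw [hshift] at hc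
        rw [hc, Sword_apply_prefix TB hTB, hmx]
      · intro c hcmem hcne
        rw [hT]
        cases c with
        | none => rfl
        | some d =>
          show Sword TB d.2.2.1 (ContinuousLinearMap.adjoint (Sword TB d.2.2.2)
            (P d (basisVec B (g x)))) = 0
          rw [hPact, if_neg, map_zero, map_zero]
          rintro ⟨x', hx', hgx⟩
          have : x' = x := g.injective hgx
          subst this
          rw [Set.mem_preimage, Set.mem_singleton_iff] at hx'
          exact hcne (hx' ▸ rfl)
      · intro hnot
        exact absurd (hfin.mem_toFinset.2 ⟨x, rfl⟩) hnot
    · rw [(hR x).2 hx]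
      refine (Finset.sum_eq_zero fun c hc => ?_).symm
      rw [hT]
      cases c with
      | none => rfl
      | some d =>
        show Sword TB d.2.2.1 (ContinuousLinearMap.adjoint (Sword TB d.2.2.2)
          (P d (basisVec B (g x)))) = 0
        rw [hPact, if_neg, map_zero, map_zero]
        rintro ⟨x', hx', hgx⟩
        have : x' = x := g.injective hgx
        subst this
        rw [Set.mem_preimage, Set.mem_singleton_iff, hD] at hx'
        simp only [if_neg hx] at hx'
        exact Option.some_ne_none d hx'.symm
  rw [hRT]
  exact hmem

end Core
section Conj
variable {H K : Type*} [NormedAddCommGroup H] [InnerProductSpace ℂ H] [CompleteSpace H]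
  [NormedAddCommGroup K] [InnerProductSpace ℂ K] [CompleteSpace K]

/-- Conjugation by a unitary, as a star algebra homomorphism `B(H) → B(K)`. -/
def conjStarAlgHom (u : H →L[ℂ] K)
    (h1 : ∀ w, ContinuousLinearMap.adjoint u (u w) = w)
    (h2 : ∀ v, u (ContinuousLinearMap.adjoint u v) = v) :
    (H →L[ℂ] H) →⋆ₐ[ℂ] (K →L[ℂ] K) where
  toFun a := u ∘L a ∘L ContinuousLinearMap.adjoint u
  map_one' := by
    ext v
    simp [h2]
  map_mul' a b := by
    ext v
    simp [ContinuousLinearMap.mul_apply, h1]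
  map_zero' := by
    ext v
    simp
  map_add' a b := by
    ext v
    simp
  commutes' c := by
    ext v
    simp only [Algebra.algebraMap_eq_smul_one, ContinuousLinearMap.coe_comp',
      Function.comp_apply, ContinuousLinearMap.smul_apply, ContinuousLinearMap.one_apply,
      _root_.map_smul]
    rw [h2]
  map_star' a := by
    simp only [ContinuousLinearMap.star_eq_adjoint, ContinuousLinearMap.adjoint_comp,
      ContinuousLinearMap.adjoint_adjoint]
    ext v
    rfl

@[simp] lemma conjStarAlgHom_apply (u : H →L[ℂ] K) (h1) (h2) (a : H →L[ℂ] H) :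
    conjStarAlgHom u h1 h2 a = u ∘L a ∘L ContinuousLinearMap.adjoint u := rfl

lemma conjStarAlgHom_continuous (u : H →L[ℂ] K) (h1) (h2) :
    Continuous (conjStarAlgHom u h1 h2) := by
  show Continuous fun a : H →L[ℂ] H => u ∘L a ∘L ContinuousLinearMap.adjoint u
  exact continuous_const.clm_comp (continuous_id.clm_comp continuous_const)

end Conj
set_option maxHeartbeats 1000000 in
/-- assume `A` and `B` satisfy condition (I).  If `h : X_A → X_B`
implements a topological orbit equivalence, then the unitary
`u_h : ℓ²(X_A) → ℓ²(X_B)` with `u_h e_x = e_{h(x)}` satisfies `u_h O_A u_h^* = O_B` and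
`u_h M_f u_h^* = M_{f∘h⁻¹}` for all `f ∈ C(X_A, ℂ)`; in particular
`u_h D_A u_h^* = D_B`, so `Ad(u_h)` is an isomorphism `Φ : O_A → O_B` with
`Φ(D_A) = D_B`. -/
theorem conjugate_CKalg_of_topOrbitEquiv
    {N N' : ℕ} (A : Matrix (Fin N) (Fin N) ℕ) (B : Matrix (Fin N') (Fin N') ℕ)
    (hA : ∀ i j, A i j = 0 ∨ A i j = 1) (hB : ∀ i j, B i j = 0 ∨ B i j = 1)
    (hIA : ConditionI A) (hIB : ConditionI B)
    (TA : Fin N → (MSHilbert A →L[ℂ] MSHilbert A)) (hTA : IsGenFamily A TA)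
    (MA : C(MarkovShift A, ℂ) → (MSHilbert A →L[ℂ] MSHilbert A)) (hMA : IsMultOp A MA)
    (TB : Fin N' → (MSHilbert B →L[ℂ] MSHilbert B)) (hTB : IsGenFamily B TB)
    (MB : C(MarkovShift B, ℂ) → (MSHilbert B →L[ℂ] MSHilbert B)) (hMB : IsMultOp B MB)
    (h : MarkovShift A ≃ₜ MarkovShift B)
    (horb : ∀ x, h '' orb A x = orb B (h x))
    (k₁ l₁ : MarkovShift A → ℕ) (hk₁ : Continuous k₁) (hl₁ : Continuous l₁)
    (hcoc₁ : ∀ x, (mshift B)^[k₁ x] (h (mshift A x)) = (mshift B)^[l₁ x] (h x))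
    (k₂ l₂ : MarkovShift B → ℕ) (hk₂ : Continuous k₂) (hl₂ : Continuous l₂)
    (hcoc₂ : ∀ y, (mshift A)^[k₂ y] (h.symm (mshift B y)) = (mshift A)^[l₂ y] (h.symm y))
    (u : MSHilbert A →L[ℂ] MSHilbert B)
    (hu : ∀ x : MarkovShift A, u (basisVec A x) = basisVec B (h x)) :
    -- `u` is a unitary
    (ContinuousLinearMap.adjoint u ∘L u = 1 ∧ u ∘L ContinuousLinearMap.adjoint u = 1)
    -- `u O_A u^* = O_B`
    ∧ (fun a => u ∘L a ∘L ContinuousLinearMap.adjoint u) '' (CKalg A TA : Set _)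
        = (CKalg B TB : Set _)
    -- `u M_f u^* = M_{f ∘ h⁻¹}`
    ∧ (∀ f : C(MarkovShift A, ℂ),
        u ∘L MA f ∘L ContinuousLinearMap.adjoint u
          = MB (f.comp (h.symm : C(MarkovShift B, MarkovShift A))))
    -- `u D_A u^* = D_B`
    ∧ (fun a => u ∘L a ∘L ContinuousLinearMap.adjoint u) '' Set.range MA
        = Set.range MB := by
  classical
  -- the adjoint of `u` on basis vectors
  have hadj : ∀ y, ContinuousLinearMap.adjoint u (basisVec B y) = basisVec A (h.symm y) := by
    intro y
    refine lp.ext (funext fun x => ?_)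
    rw [coord_eq_conj_inner, ContinuousLinearMap.adjoint_inner_left, hu x,
      inner_basisVec_basisVec, basisVec_apply]
    by_cases hc : x = h.symm y
    · have hyx : y = h x := by rw [hc, h.apply_symm_apply]
      rw [if_pos hyx, if_pos hc]
      exact RingHom.map_one _
    · have hyx : y ≠ h x := fun hy => hc (by rw [hy, h.symm_apply_apply])
      rw [if_neg hyx, if_neg hc]
      exact RingHom.map_zero _
  -- unitarity
  have hcomp1 : ContinuousLinearMap.adjoint u ∘L u = 1 := by
    refine clm_ext_basis _ _ fun x => ?_
    rw [ContinuousLinearMap.coe_comp', Function.comp_apply, hu, hadj,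
      h.symm_apply_apply, ContinuousLinearMap.one_apply]
  have hcomp2 : u ∘L ContinuousLinearMap.adjoint u = 1 := by
    refine clm_ext_basis _ _ fun y => ?_
    rw [ContinuousLinearMap.coe_comp', Function.comp_apply, hadj, hu,
      h.apply_symm_apply, ContinuousLinearMap.one_apply]
  have h1' : ∀ w, ContinuousLinearMap.adjoint u (u w) = w := by
    intro w
    have := ContinuousLinearMap.ext_iff.1 hcomp1 w
    simpa using this
  have h2' : ∀ v, u (ContinuousLinearMap.adjoint u v) = v := by
    intro v
    have := ContinuousLinearMap.ext_iff.1 hcomp2 v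
    simpa using this
  -- conjugation of multiplication operators
  have hmult : ∀ f : C(MarkovShift A, ℂ),
      u ∘L MA f ∘L ContinuousLinearMap.adjoint u
        = MB (f.comp (h.symm : C(MarkovShift B, MarkovShift A))) := by
    intro f
    refine clm_ext_basis _ _ fun y => ?_
    simp only [ContinuousLinearMap.coe_comp', Function.comp_apply]
    rw [hadj, hMA f, _root_.map_smul, hu, hMB, h.apply_symm_apply]
    rfl
  -- generators conjugate into the opposite algebra
  have hTAin : ∀ i, u ∘L TA i ∘L ContinuousLinearMap.adjoint u ∈ CKalg B TB := by
    intro i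
    refine core_mem TB hTB h k₁ l₁ hk₁ hl₁ hcoc₁ i _ fun x => ⟨?_, ?_⟩
    · intro hadm
      simp only [ContinuousLinearMap.coe_comp', Function.comp_apply]
      rw [hadj, h.symm_apply_apply, (hTA i x).1 hadm, hu]
    · intro hadm
      simp only [ContinuousLinearMap.coe_comp', Function.comp_apply]
      rw [hadj, h.symm_apply_apply, (hTA i x).2 hadm, map_zero]
  have hTBin : ∀ j, ContinuousLinearMap.adjoint u ∘L TB j ∘L u ∈ CKalg A TA := by
    intro j
    refine core_mem TA hTA h.symm k₂ l₂ hk₂ hl₂ hcoc₂ j _ fun y => ⟨?_, ?_⟩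
    · intro hadm
      simp only [ContinuousLinearMap.coe_comp', Function.comp_apply]
      rw [hu, h.apply_symm_apply, (hTB j y).1 hadm, hadj]
    · intro hadm
      simp only [ContinuousLinearMap.coe_comp', Function.comp_apply]
      rw [hu, h.apply_symm_apply, (hTB j y).2 hadm, map_zero]
  -- the conjugation star algebra homomorphisms
  set Ψ := conjStarAlgHom u h1' h2' with hΨ
  have h1'' : ∀ w, ContinuousLinearMap.adjoint (ContinuousLinearMap.adjoint u)
      (ContinuousLinearMap.adjoint u w) = w := by
    intro w
    rw [ContinuousLinearMap.adjoint_adjoint]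
    exact h2' w
  have h2'' : ∀ v, ContinuousLinearMap.adjoint u
      (ContinuousLinearMap.adjoint (ContinuousLinearMap.adjoint u) v) = v := by
    intro v
    rw [ContinuousLinearMap.adjoint_adjoint]
    exact h1' v
  set Ψ' := conjStarAlgHom (ContinuousLinearMap.adjoint u) h1'' h2'' with hΨ'
  have hΨ'app : ∀ b, Ψ' b = ContinuousLinearMap.adjoint u ∘L b ∘L u := by
    intro b
    rw [hΨ', conjStarAlgHom_apply, ContinuousLinearMap.adjoint_adjoint]
  -- the image of a Cuntz--Krieger algebra under conjugation
  have himage : ∀ {N₁ N₂ : ℕ} {A₁ : Matrix (Fin N₁) (Fin N₁) ℕ}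
      {A₂ : Matrix (Fin N₂) (Fin N₂) ℕ}
      (T₁ : Fin N₁ → (MSHilbert A₁ →L[ℂ] MSHilbert A₁))
      (T₂ : Fin N₂ → (MSHilbert A₂ →L[ℂ] MSHilbert A₂))
      (Φ : (MSHilbert A₁ →L[ℂ] MSHilbert A₁) →⋆ₐ[ℂ] (MSHilbert A₂ →L[ℂ] MSHilbert A₂)),
      Continuous Φ → (∀ i, Φ (T₁ i) ∈ CKalg A₂ T₂) →
      ∀ a ∈ CKalg A₁ T₁, Φ a ∈ CKalg A₂ T₂ := by
    intro N₁ N₂ A₁ A₂ T₁ T₂ Φ hΦc hΦT a ha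
    have hsub : (StarAlgebra.adjoin ℂ (Set.range T₁)) ≤ (CKalg A₂ T₂).comap Φ :=
      StarAlgebra.adjoin_le (by rintro _ ⟨i, rfl⟩; exact hΦT i)
    have hmem : Φ a ∈ closure (Φ '' (StarAlgebra.adjoin ℂ (Set.range T₁) : Set _)) :=
      image_closure_subset_closure_image hΦc ⟨a, ha, rfl⟩
    refine closure_minimal ?_ (StarSubalgebra.isClosed_topologicalClosure _) hmem
    rintro _ ⟨b, hb, rfl⟩
    exact hsub hb
  refine ⟨⟨hcomp1, hcomp2⟩, ?_, hmult, ?_⟩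
  · -- u O_A u* = O_B
    apply Set.eq_of_subset_of_subset
    · rintro _ ⟨a, ha, rfl⟩
      exact himage TA TB Ψ (conjStarAlgHom_continuous u h1' h2') hTAin a ha
    · intro b hb
      refine ⟨ContinuousLinearMap.adjoint u ∘L b ∘L u, ?_, ?_⟩
      · have := himage TB TA Ψ'
          (conjStarAlgHom_continuous (ContinuousLinearMap.adjoint u) h1'' h2'')
          (fun j => by rw [hΨ'app]; exact hTBin j) b hb
        rwa [hΨ'app] at this
      · refine ContinuousLinearMap.ext fun v => ?_
        simp only [ContinuousLinearMap.coe_comp', Function.comp_apply]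
        rw [h2', h2']
  · -- u D_A u* = D_B
    apply Set.eq_of_subset_of_subset
    · rintro _ ⟨_, ⟨f, rfl⟩, rfl⟩
      exact ⟨f.comp (h.symm : C(MarkovShift B, MarkovShift A)), (hmult f).symm⟩
    · rintro _ ⟨f, rfl⟩
      refine ⟨MA (f.comp (h : C(MarkovShift A, MarkovShift B))), ⟨_, rfl⟩, ?_⟩
      show u ∘L MA (f.comp (h : C(MarkovShift A, MarkovShift B))) ∘L
        ContinuousLinearMap.adjoint u = MB f
      rw [hmult]
      congr 1
      refine ContinuousMap.ext fun y => ?_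
      show f (h (h.symm y)) = f y
      rw [h.apply_symm_apply]
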